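/- For every nonzero signal f in ℂ^N, the product of the size of the support of f and the size of the support of its discrete Fourier transform is at least N. -/

import Mathlib

open scoped Classical

/-- The unitary discrete Fourier transform on `ℂ^N`. -/
noncomputable def dft (N : ℕ) [NeZero N] (f : ZMod N → ℂ) : ZMod N → ℂ :=
  fun ω => (1 / Real.sqrt N : ℂ) *
    ∑ t : ZMod N, f t *
      Complex.exp (-(2 * Real.pi * Complex.I * (ω.val : ℂ) * (t.val : ℂ)) / N)

/-- The support of a finite signal, as a finset. -/
noncomputable def dsupp (N : ℕ) [NeZero N] (f : ZMod N → ℂ) : Finset (ZMod N) :=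
  Finset.univ.filter (fun t => f t ≠ 0)

section aux

open Finset

variable {N : ℕ} [NeZero N]

private lemma exp_eq_char (ω t : ZMod N) :
    Complex.exp (-(2 * Real.pi * Complex.I * (ω.val : ℂ) * (t.val : ℂ)) / N)
      = ZMod.stdAddChar (-(t * ω)) := by
  have h : (((-(t.val * ω.val : ℤ)) : ℤ) : ZMod N) = -(t * ω) := by
    push_cast
    simp [ZMod.natCast_zmod_val]
  rw [← h, ZMod.stdAddChar_coe]
  congr 1
  push_cast
  ring

private lemma conj_char (x : ZMod N) :
    (starRingEnd ℂ) (ZMod.stdAddChar x) = ZMod.stdAddChar (-x) := by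
  rw [ZMod.stdAddChar_apply, ZMod.stdAddChar_apply, AddChar.map_neg_eq_inv]
  exact (Circle.coe_inv_eq_conj _).symm

private lemma norm_char (x : ZMod N) : ‖ZMod.stdAddChar x‖ = 1 := by
  rw [ZMod.stdAddChar_apply]
  exact Circle.norm_coe _

private lemma orth (t : ZMod N) :
    ∑ i : ZMod N, ZMod.stdAddChar (t * i) = if t = 0 then (N : ℂ) else 0 := by
  split_ifs with h
  · simp [h, Finset.card_univ]
  · exact AddChar.sum_eq_zero_of_ne_one (ZMod.isPrimitive_stdAddChar N h)

private lemma parseval_c (f : ZMod N → ℂ) :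
    ∑ k, ZMod.dft f k * (starRingEnd ℂ) (ZMod.dft f k)
      = N * ∑ t, f t * (starRingEnd ℂ) (f t) := by
  simp only [ZMod.dft_apply, smul_eq_mul, map_sum, map_mul, conj_char, neg_neg]
  calc
    ∑ k, (∑ j, ZMod.stdAddChar (-(j * k)) * f j) *
        (∑ l, ZMod.stdAddChar (l * k) * (starRingEnd ℂ) (f l))
      = ∑ k, ∑ j, ∑ l, (f j * (starRingEnd ℂ) (f l)) * ZMod.stdAddChar ((l - j) * k) := by
        refine sum_congr rfl fun k _ => ?_
        rw [Finset.sum_mul_sum]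
        refine sum_congr rfl fun j _ => sum_congr rfl fun l _ => ?_
        have hc : ZMod.stdAddChar (-(j * k)) * ZMod.stdAddChar (l * k)
            = ZMod.stdAddChar ((l - j) * k) := by
          rw [← AddChar.map_add_eq_mul]
          congr 1
          ring
        rw [← hc]; ring
    _ = ∑ j, ∑ l, (f j * (starRingEnd ℂ) (f l)) * ∑ k, ZMod.stdAddChar ((l - j) * k) := by
        rw [Finset.sum_comm]
        refine sum_congr rfl fun j _ => ?_
        rw [Finset.sum_comm]
        exact sum_congr rfl fun l _ => (Finset.mul_sum _ _ _).symm
    _ = ∑ j, ∑ l, (f j * (starRingEnd ℂ) (f l)) * (if l = j then (N : ℂ) else 0) := by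
        refine sum_congr rfl fun j _ => sum_congr rfl fun l _ => ?_
        rw [orth]
        simp [sub_eq_zero]
    _ = N * ∑ t, f t * (starRingEnd ℂ) (f t) := by
        rw [Finset.mul_sum]
        refine sum_congr rfl fun j _ => ?_
        simp [Finset.sum_ite_eq', mul_comm]

private lemma parseval_r (f : ZMod N → ℂ) :
    ∑ k, ‖ZMod.dft f k‖ ^ 2 = N * ∑ t, ‖f t‖ ^ 2 := by
  have h : ∀ z : ℂ, z * (starRingEnd ℂ) z = ((‖z‖ ^ 2 : ℝ) : ℂ) := fun z => by
    rw [Complex.mul_conj, Complex.normSq_eq_norm_sq]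
  have := parseval_c f
  simp only [h] at this
  exact_mod_cast this

private lemma dft_eq_aux (f : ZMod N → ℂ) (ω : ZMod N) :
    dft N f ω = (1 / Real.sqrt N : ℂ) * ZMod.dft f ω := by
  rw [ZMod.dft_apply]
  show (1 / Real.sqrt N : ℂ) * _ = _
  congr 1
  refine Finset.sum_congr rfl fun t _ => ?_
  rw [exp_eq_char, smul_eq_mul, mul_comm]

end aux

/-- Multiplicative discrete uncertainty principle: `|supp f| · |supp f̂| ≥ N`. -/
theorem stmt_1 (N : ℕ) [NeZero N] (f : ZMod N → ℂ) (hf : f ≠ 0) :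
    N ≤ (dsupp N f).card * (dsupp N (dft N f)).card := by
  set A := dsupp N f with hA
  set B := dsupp N (dft N f) with hB
  set E := ∑ t, ‖f t‖ ^ 2 with hE
  have hN : (0 : ℝ) < N := by
    exact_mod_cast Nat.pos_of_ne_zero (NeZero.ne N)
  have hEpos : 0 < E := by
    obtain ⟨t0, ht0⟩ : ∃ t, f t ≠ 0 := by
      by_contra h
      push_neg at h
      exact hf (funext h)
    have h1 : 0 < ‖f t0‖ ^ 2 := pow_pos (norm_pos_iff.mpr ht0) 2
    exact lt_of_lt_of_le h1
      (Finset.single_le_sum (f := fun t => ‖f t‖ ^ 2) (fun t _ => by positivity)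
        (Finset.mem_univ t0))
  -- norm of the scaling constant
  have hc : ‖(1 / Real.sqrt N : ℂ)‖ ^ 2 = 1 / N := by
    rw [norm_div, Complex.norm_real, norm_one, Real.norm_eq_abs,
      abs_of_nonneg (Real.sqrt_nonneg _), div_pow, one_pow, Real.sq_sqrt hN.le]
  have hg2 : ∀ ω, (N : ℝ) * ‖dft N f ω‖ ^ 2 = ‖ZMod.dft f ω‖ ^ 2 := by
    intro ω
    rw [dft_eq_aux, norm_mul, mul_pow, hc]
    field_simp
  -- Parseval for the unitary transform
  have hgsum : ∑ ω, ‖dft N f ω‖ ^ 2 = E := by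
    have h1 : (N : ℝ) * ∑ ω, ‖dft N f ω‖ ^ 2 = (N : ℝ) * E := by
      rw [Finset.mul_sum]
      simp only [hg2]
      rw [parseval_r]
    exact mul_left_cancel₀ hN.ne' h1
  -- pointwise bound on the Fourier side
  have hbound : ∀ ω, (N : ℝ) * ‖dft N f ω‖ ^ 2 ≤ A.card * E := by
    intro ω
    rw [hg2]
    have h1 : ‖ZMod.dft f ω‖ ≤ ∑ t ∈ A, ‖f t‖ := by
      rw [ZMod.dft_apply]
      refine le_trans (norm_sum_le _ _) ?_
      have h2 : ∀ t : ZMod N, ‖ZMod.stdAddChar (-(t * ω)) • f t‖ = ‖f t‖ := fun t => by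
        rw [norm_smul, norm_char, one_mul]
      rw [Finset.sum_congr rfl fun t _ => h2 t]
      refine le_of_eq (Finset.sum_subset (Finset.subset_univ _) fun x _ hx => ?_).symm
      have hx0 : f x = 0 := by
        by_contra h
        exact hx (by simp [hA, dsupp, h])
      simp [hx0]
    have h3 : (∑ t ∈ A, ‖f t‖) ^ 2 ≤ A.card * ∑ t ∈ A, ‖f t‖ ^ 2 :=
      sq_sum_le_card_mul_sum_sq
    have h4 : ∑ t ∈ A, ‖f t‖ ^ 2 ≤ E :=
      Finset.sum_le_sum_of_subset_of_nonneg (Finset.subset_univ _)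
        (fun t _ _ => by positivity)
    calc ‖ZMod.dft f ω‖ ^ 2 ≤ (∑ t ∈ A, ‖f t‖) ^ 2 :=
          pow_le_pow_left₀ (norm_nonneg _) h1 2
      _ ≤ A.card * ∑ t ∈ A, ‖f t‖ ^ 2 := h3
      _ ≤ A.card * E := mul_le_mul_of_nonneg_left h4 (Nat.cast_nonneg _)
  -- combine everything
  have hEB : E = ∑ ω ∈ B, ‖dft N f ω‖ ^ 2 := by
    rw [← hgsum]
    refine (Finset.sum_subset (Finset.subset_univ _) fun x _ hx => ?_).symm
    have hx0 : dft N f x = 0 := by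
      by_contra h
      exact hx (by simp [hB, dsupp, h])
    simp [hx0]
  have hfin : (N : ℝ) * E ≤ ((A.card * B.card : ℕ) : ℝ) * E := by
    calc (N : ℝ) * E = ∑ ω ∈ B, (N : ℝ) * ‖dft N f ω‖ ^ 2 := by
          rw [← Finset.mul_sum, ← hEB]
      _ ≤ ∑ ω ∈ B, (A.card : ℝ) * E := Finset.sum_le_sum fun ω _ => hbound ω
      _ = ((A.card * B.card : ℕ) : ℝ) * E := by
          rw [Finset.sum_const, nsmul_eq_mul]
          push_cast
          ring
  have hle : (N : ℝ) ≤ ((A.card * B.card : ℕ) : ℝ) :=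
    le_of_mul_le_mul_right hfin hEpos
  exact_mod_cast hle
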